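/- Over ℚ (or any commutative ring containing ℚ), the formal power series identity C_{β,α₁+α₂}(x) = C_{β,α₁}(x) · C_{β,α₂}(x) holds for positive integers β, α₁, α₂, where C_{β,γ}(x) = ∑_{n≥0} (γ/(βn+γ)) C(βn+γ, n) x^n. -/

import Mathlib

open PowerSeries

/-- The generating function of the generalized Catalan numbers. -/
noncomputable def genCatalanSeries (β γ : ℕ) : PowerSeries ℚ :=
  PowerSeries.mk fun n => ((γ : ℚ) / (β * n + γ)) * ((β * n + γ).choose n)

private lemma key (β γ n : ℕ) (hβ : 1 ≤ β) :
    ((γ:ℚ)+1)/((β:ℚ)*(n+1)+γ+1) * (((β*(n+1)+γ+1).choose (n+1)) : ℚ)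
    = (γ:ℚ)/((β:ℚ)*(n+1)+γ) * (((β*(n+1)+γ).choose (n+1)) : ℚ)
    + ((γ:ℚ)+β)/((β:ℚ)*n+γ+β) * (((β*n+γ+β).choose n) : ℚ) := by
  set m := β*(n+1)+γ with hm
  have hm2 : β*n+γ+β = m := by rw [hm]; ring
  have hmn : n ≤ m := by calc n ≤ 1*(n+1)+γ - 1 := by omega
                             _ ≤ β*(n+1)+γ - 1 := by have := Nat.mul_le_mul_right (n+1) hβ; omega
                             _ ≤ m := by omega
  have hmq : (m:ℚ) = (β:ℚ)*(n+1)+γ := by push_cast [hm]; ring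
  have hy : ((m.choose (n+1)):ℚ) * (n+1) = (m.choose n) * ((m:ℚ) - n) := by
    have h2 : ((m.choose (n+1)):ℚ) * (n+1) = (m.choose n) * ((m - n : ℕ):ℚ) := by
      exact_mod_cast Nat.choose_succ_right_eq m n
    rwa [Nat.cast_sub hmn] at h2
  have hy' : ((m.choose (n+1)):ℚ) = (m.choose n) * ((m:ℚ) - n) / (n+1) := by
    rw [eq_div_iff (by positivity : ((n:ℚ)+1) ≠ 0)]; exact hy
  have hch : (((β*(n+1)+γ+1).choose (n+1)) : ℚ) = (m.choose n) + (m.choose (n+1)) := by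
    rw [show β*(n+1)+γ+1 = m+1 from rfl, Nat.choose_succ_succ m n]; push_cast; ring
  rw [hm2, hch, hy', hmq]
  have hmne : ((β:ℚ)*(n+1)+γ) ≠ 0 := by positivity
  have hmne1 : ((β:ℚ)*(n+1)+γ+1) ≠ 0 := by positivity
  have hn1 : ((n:ℚ)+1) ≠ 0 := by positivity
  field_simp
  ring

/-- Variant of the generating function which is `1` at `γ = 0`. -/
noncomputable def Dser (β γ : ℕ) : PowerSeries ℚ :=
  if γ = 0 then 1 else genCatalanSeries β γ

private lemma coeff_gen (β γ n : ℕ) :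
    PowerSeries.coeff (R := ℚ) n (genCatalanSeries β γ)
      = ((γ : ℚ) / ((β:ℚ) * n + γ)) * ((β * n + γ).choose n) := by
  simp [genCatalanSeries]

private lemma Dser_eq (β γ : ℕ) (hγ : γ ≠ 0) : Dser β γ = genCatalanSeries β γ :=
  if_neg hγ

private lemma coeff_zero_D (β γ : ℕ) : PowerSeries.coeff (R := ℚ) 0 (Dser β γ) = 1 := by
  rcases Nat.eq_zero_or_pos γ with h | h
  · simp [Dser, h]
  · rw [Dser_eq β γ h.ne', coeff_gen]
    have : ((γ:ℚ)) ≠ 0 := Nat.cast_ne_zero.mpr h.ne'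
    simp [this]

private lemma coeff_D (β γ n : ℕ) (hγ : γ ≠ 0) :
    PowerSeries.coeff (R := ℚ) n (Dser β γ)
      = ((γ : ℚ) / ((β:ℚ) * n + γ)) * ((β * n + γ).choose n) := by
  rw [Dser_eq β γ hγ, coeff_gen]

private lemma coeff_succ_D (β γ n : ℕ) :
    PowerSeries.coeff (R := ℚ) (n+1) (Dser β γ)
      = ((γ : ℚ) / ((β:ℚ) * (n+1) + γ)) * ((β * (n+1) + γ).choose (n+1)) := by
  rcases Nat.eq_zero_or_pos γ with h | h
  · subst h; simp [Dser]
  · rw [coeff_D β γ (n+1) h.ne']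
    push_cast
    ring

private lemma Dser_rec (β γ : ℕ) (hβ : 1 ≤ β) :
    Dser β (γ+1) = Dser β γ + PowerSeries.X * Dser β (γ+β) := by
  ext n
  rcases n with _ | n
  · have hX : (PowerSeries.coeff (R := ℚ) 0) (PowerSeries.X * Dser β (γ+β)) = 0 := by simp
    rw [map_add, hX, add_zero, coeff_zero_D, coeff_zero_D]
  · rw [map_add, PowerSeries.coeff_succ_X_mul, coeff_succ_D, coeff_succ_D,
      coeff_D β (γ+β) n (by omega)]
    have h1 : β*(n+1)+(γ+1) = β*(n+1)+γ+1 := by ring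
    have h3 : β*n+(γ+β) = β*n+γ+β := by ring
    rw [h1, h3]
    have := key β γ n hβ
    push_cast
    linear_combination this

private lemma Dser_pow (β : ℕ) (hβ : 1 ≤ β) :
    ∀ n γ, PowerSeries.coeff (R := ℚ) n (Dser β γ) = PowerSeries.coeff (R := ℚ) n ((Dser β 1)^γ) := by
  have h0 : ∀ δ, PowerSeries.constantCoeff (R := ℚ) (Dser β δ) = 1 := fun δ => by
    simpa using coeff_zero_D β δ
  intro n
  induction n using Nat.strong_induction_on with
  | _ n IH =>
    cases n with
    | zero =>
      intro γ
      simp only [PowerSeries.coeff_zero_eq_constantCoeff, map_pow]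
      rw [h0, h0, one_pow]
    | succ n =>
      intro γ
      induction γ with
      | zero => simp [Dser]
      | succ γ ihγ =>
        have hB : Dser β 1 = 1 + PowerSeries.X * Dser β β := by
          have h := Dser_rec β 0 hβ
          rw [show Dser β 0 = 1 from if_pos rfl, show (0:ℕ)+β = β by omega] at h
          exact h
        have e1 : PowerSeries.coeff (R := ℚ) n ((Dser β 1)^γ * Dser β β)
            = PowerSeries.coeff (R := ℚ) n ((Dser β 1)^γ * (Dser β 1)^β) := by
          rw [PowerSeries.coeff_mul, PowerSeries.coeff_mul]
          refine Finset.sum_congr rfl fun p hp => ?_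
          have h := (Finset.HasAntidiagonal.mem_antidiagonal).mp hp
          have hp2 : p.2 ≤ n := by omega
          rw [IH p.2 (Nat.lt_succ_of_le hp2) β]
        calc PowerSeries.coeff (R := ℚ) (n+1) (Dser β (γ+1))
            = PowerSeries.coeff (R := ℚ) (n+1) (Dser β γ)
              + PowerSeries.coeff (R := ℚ) n (Dser β (γ+β)) := by
              rw [Dser_rec β γ hβ, map_add, PowerSeries.coeff_succ_X_mul]
          _ = PowerSeries.coeff (R := ℚ) (n+1) ((Dser β 1)^γ)
              + PowerSeries.coeff (R := ℚ) n ((Dser β 1)^γ * Dser β β) := by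
              rw [ihγ, IH n (Nat.lt_succ_self n) (γ+β), pow_add, e1]
          _ = PowerSeries.coeff (R := ℚ) (n+1) ((Dser β 1)^(γ+1)) := by
              have e2 : PowerSeries.coeff (R := ℚ) (n+1) ((Dser β 1)^(γ+1))
                  = PowerSeries.coeff (R := ℚ) (n+1) ((Dser β 1)^γ)
                    + PowerSeries.coeff (R := ℚ) n ((Dser β 1)^γ * Dser β β) := by
                conv_lhs => rw [pow_succ]
                nth_rewrite 2 [hB]
                rw [mul_add, mul_one, map_add]
                congr 1
                rw [show (Dser β 1)^γ * (PowerSeries.X * Dser β β)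
                      = PowerSeries.X * ((Dser β 1)^γ * Dser β β) by ring,
                  PowerSeries.coeff_succ_X_mul]
              exact e2.symm

theorem stmt_13 (β α₁ α₂ : ℕ) (hβ : 0 < β) (h₁ : 0 < α₁) (h₂ : 0 < α₂) :
    genCatalanSeries β (α₁ + α₂) = genCatalanSeries β α₁ * genCatalanSeries β α₂ := by
  have hD : ∀ γ, Dser β γ = (Dser β 1)^γ := fun γ => PowerSeries.ext fun n => Dser_pow β hβ n γ
  rw [← Dser_eq β (α₁+α₂) (by omega), ← Dser_eq β α₁ h₁.ne', ← Dser_eq β α₂ h₂.ne',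
    hD (α₁+α₂), hD α₁, hD α₂, pow_add]
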